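/- Let γ > 0 and 0 < m² < 4(1+γ), and set u_± = −(1 + 1/γ) ± √(1 + γm²)/γ and h = (2+γ)/(2m²). Then for all θ ∈ (0, π), with u = cos θ, one has the factorization h − V(θ) = γ(1 − u)(u − u_−)(u − u_+)/(2m²(1 + u)). In particular, h − V(θ) > 0 exactly when u_+ < cos θ < 1, and along any solution with energy h the equation ½(θ')² = h − V(θ) is equivalent to (u')² = (γ/m²)(1 − u)²(u − u_−)(u − u_+). -/

import Mathlib

open Real

/-- For `γ > 0`, `0 < m² < 4(1+γ)`, roots `u_±` and homoclinic energy
`h = (2+γ)/(2m²)`: for all `θ ∈ (0, π)`, with `u = cos θ`, one has the factorization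
`h − V(θ) = γ(1 − u)(u − u_−)(u − u_+)/(2m²(1 + u))`; in particular `h − V(θ) > 0` exactly
when `u_+ < cos θ < 1`, and along any solution with energy `h` the equation
`½(θ')² = h − V(θ)` is equivalent to `(u')² = (γ/m²)(1 − u)²(u − u_−)(u − u_+)`. -/
theorem energy_factorization (γ m : ℝ) (hγ : 0 < γ)
    (hm₁ : 0 < m ^ 2) (hm₂ : m ^ 2 < 4 * (1 + γ))
    (uplus uminus h : ℝ)
    (hup : uplus = -(1 + 1 / γ) + Real.sqrt (1 + γ * m ^ 2) / γ)
    (hum : uminus = -(1 + 1 / γ) - Real.sqrt (1 + γ * m ^ 2) / γ)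
    (hh : h = (2 + γ) / (2 * m ^ 2))
    (V : ℝ → ℝ)
    (hV : ∀ θ, V θ = (1 - cos θ) / (2 * (1 + cos θ)) + cos θ / m ^ 2
      + γ * (cos θ) ^ 2 / (2 * m ^ 2)) :
    (∀ θ ∈ Set.Ioo (0 : ℝ) π,
      h - V θ = γ * (1 - cos θ) * (cos θ - uminus) * (cos θ - uplus)
        / (2 * m ^ 2 * (1 + cos θ))) ∧
    (∀ θ ∈ Set.Ioo (0 : ℝ) π,
      (0 < h - V θ ↔ uplus < cos θ ∧ cos θ < 1)) ∧
    (∀ θ : ℝ → ℝ, Differentiable ℝ θ → (∀ t, θ t ∈ Set.Ioo (0 : ℝ) π) →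
      ∀ t : ℝ,
        ((1 / 2) * (deriv θ t) ^ 2 = h - V (θ t) ↔
          (deriv (fun s => cos (θ s)) t) ^ 2 =
            (γ / m ^ 2) * (1 - cos (θ t)) ^ 2 * (cos (θ t) - uminus) * (cos (θ t) - uplus))) := by
  have hγ' : γ ≠ 0 := ne_of_gt hγ
  have hm' : m ^ 2 ≠ 0 := ne_of_gt hm₁
  set s : ℝ := Real.sqrt (1 + γ * m ^ 2) with hs
  have hspos : 0 < 1 + γ * m ^ 2 := by positivity
  have hs2 : s ^ 2 = 1 + γ * m ^ 2 := Real.sq_sqrt hspos.le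
  have hsnn : 0 < s := Real.sqrt_pos.mpr hspos
  -- cosine bounds
  have hcos : ∀ θ ∈ Set.Ioo (0 : ℝ) π, -1 < cos θ ∧ cos θ < 1 := by
    intro θ hθ
    constructor
    · have := Real.cos_lt_cos_of_nonneg_of_le_pi hθ.1.le le_rfl hθ.2
      simpa using this
    · have := Real.cos_lt_cos_of_nonneg_of_le_pi le_rfl (le_of_lt (hθ.2.trans_le le_rfl)) hθ.1
      simpa using this
  -- u₋ < -1
  have humlt : uminus < -1 := by
    rw [hum]
    have h1 : 0 < 1 / γ + s / γ := by positivity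
    linarith
  -- quadratic product identity
  have prodeq : ∀ u : ℝ, (u - uminus) * (u - uplus)
      = u ^ 2 + 2 * (1 + 1 / γ) * u + 1 + 2 / γ - m ^ 2 / γ := by
    intro u
    rw [hup, hum]
    have : (u - (-(1 + 1 / γ) - s / γ)) * (u - (-(1 + 1 / γ) + s / γ))
        = (u + (1 + 1 / γ)) ^ 2 - s ^ 2 / γ ^ 2 := by ring
    rw [this, hs2]
    field_simp
    ring
  -- factorization for u with -1 < u < 1
  have key : ∀ u : ℝ, -1 < u → u < 1 →
      h - ((1 - u) / (2 * (1 + u)) + u / m ^ 2 + γ * u ^ 2 / (2 * m ^ 2))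
        = γ * (1 - u) * (u - uminus) * (u - uplus) / (2 * m ^ 2 * (1 + u)) := by
    intro u hu1 hu2
    have h1u : (1 : ℝ) + u ≠ 0 := by linarith
    have hpe : γ * (1 - u) * (u - uminus) * (u - uplus)
        = γ * (1 - u) * (u ^ 2 + 2 * (1 + 1 / γ) * u + 1 + 2 / γ - m ^ 2 / γ) := by
      rw [show γ * (1 - u) * (u - uminus) * (u - uplus)
          = γ * (1 - u) * ((u - uminus) * (u - uplus)) by ring, prodeq u]
    have hm0 : m ≠ 0 := fun h0 => hm' (by rw [h0]; ring)
    rw [hh, hpe]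
    field_simp
    ring
  have fact : ∀ θ ∈ Set.Ioo (0 : ℝ) π,
      h - V θ = γ * (1 - cos θ) * (cos θ - uminus) * (cos θ - uplus)
        / (2 * m ^ 2 * (1 + cos θ)) := by
    intro θ hθ
    obtain ⟨h1, h2⟩ := hcos θ hθ
    rw [hV]
    exact key (cos θ) h1 h2
  refine ⟨fact, ?_, ?_⟩
  · -- positivity iff
    intro θ hθ
    obtain ⟨h1, h2⟩ := hcos θ hθ
    rw [fact θ hθ]
    have p1 : (0:ℝ) < 1 - cos θ := by linarith
    have p2 : (0:ℝ) < cos θ - uminus := by linarith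
    have p3 : (0:ℝ) < 1 + cos θ := by linarith
    have hden : (0:ℝ) < 2 * m ^ 2 * (1 + cos θ) := by
      have : (0:ℝ) < 2 * m ^ 2 := by positivity
      exact mul_pos this p3
    have hA : (0:ℝ) < γ * (1 - cos θ) * (cos θ - uminus) :=
      mul_pos (mul_pos hγ p1) p2
    constructor
    · intro hpos
      refine ⟨?_, h2⟩
      by_contra hle
      push_neg at hle
      have hnp : γ * (1 - cos θ) * (cos θ - uminus) * (cos θ - uplus) ≤ 0 := by
        nlinarith
      have := div_nonpos_of_nonpos_of_nonneg hnp hden.le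
      linarith
    · rintro ⟨hlt, -⟩
      have p4 : (0:ℝ) < cos θ - uplus := by linarith
      exact div_pos (mul_pos hA p4) hden
  · -- derivative equivalence
    intro θ hdiff hmem t
    have hd : deriv (fun s => cos (θ s)) t = -sin (θ t) * deriv θ t := by
      have h1 : HasDerivAt θ (deriv θ t) t := (hdiff t).hasDerivAt
      exact ((Real.hasDerivAt_cos (θ t)).comp t h1).deriv
    obtain ⟨h1, h2⟩ := hcos (θ t) (hmem t)
    have hsin : sin (θ t) ^ 2 = 1 - cos (θ t) ^ 2 := Real.sin_sq (θ t)
    rw [fact (θ t) (hmem t), hd]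
    set u := cos (θ t) with hu
    set w := deriv θ t with hw
    have p3 : (0:ℝ) < 1 + u := by linarith
    have p1 : (0:ℝ) < 1 - u := by linarith
    have hdenne : (2 * m ^ 2 * (1 + u)) ≠ 0 := by
      have : (0:ℝ) < 2 * m ^ 2 * (1 + u) := by
        have : (0:ℝ) < 2 * m ^ 2 := by positivity
        exact mul_pos this p3
      exact this.ne'
    have hlhs : (-sin (θ t) * w) ^ 2 = (1 - u ^ 2) * w ^ 2 := by
      rw [show (-sin (θ t) * w) ^ 2 = sin (θ t) ^ 2 * w ^ 2 by ring, hsin]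
    rw [hlhs]
    constructor
    · intro hEq
      rw [eq_div_iff hdenne] at hEq
      rw [div_mul_eq_mul_div, div_mul_eq_mul_div, div_mul_eq_mul_div, eq_div_iff hm']
      linear_combination (1 - u) * hEq
    · intro hEq
      have hEq' : m ^ 2 * ((1 - u ^ 2) * w ^ 2)
          = γ * (1 - u) ^ 2 * (u - uminus) * (u - uplus) := by
        have hm0 : m ≠ 0 := fun h0 => hm' (by rw [h0]; ring)
        rw [hEq]; field_simp
      have h3 : (1 - u) * (m ^ 2 * (1 + u) * w ^ 2)
          = (1 - u) * (γ * (1 - u) * (u - uminus) * (u - uplus)) := by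
        linear_combination hEq'
      have h4 := mul_left_cancel₀ p1.ne' h3
      rw [eq_div_iff hdenne]
      linear_combination h4
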